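/- Let S ∈ ℝ and define, for x > 0, W01(x) = 2·(1 − √(1 + S²/(4x))). Then for all x_1, x_2 > 0 with x_1 ≠ x_2, the genus-zero two-point function identity holds: (1/√(1 + S²/(4x_1)))·( x_2·∂/∂x_2 + 1/2 ) applied to (W01(x_1) − W01(x_2))/(x_1 − x_2) equals (1/(2(x_1 − x_2)²))·( (S² + 2(x_1 + x_2))/(√(1 + S²/(4x_1))·√(1 + S²/(4x_2))) − 2(x_1 + x_2) ). -/

import Mathlib

noncomputable section

/-- The genus-zero one-point function of the generalized BGW model,
`W01(x) = 2·(1 − √(1 + S²/(4x)))`, solving `W01² − 4·W01 − S²/x = 0`. -/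
def W01 (S x : ℝ) : ℝ := 2*(1 - Real.sqrt (1 + S^2/(4*x)))

/-- the genus-zero two-point function identity: applying
`(1/√(1+S²/(4x₁)))·(x₂·∂/∂x₂ + 1/2)` to `(W01(x₁) − W01(x₂))/(x₁ − x₂)` gives
`(1/(2(x₁−x₂)²))·((S²+2(x₁+x₂))/(√(1+S²/(4x₁))·√(1+S²/(4x₂))) − 2(x₁+x₂))`. -/
theorem genus_zero_two_point (S x₁ x₂ : ℝ) (h₁ : 0 < x₁) (h₂ : 0 < x₂)
    (hne : x₁ ≠ x₂) :
    (1/Real.sqrt (1 + S^2/(4*x₁))) *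
      (x₂ * deriv (fun y => (W01 S x₁ - W01 S y)/(x₁ - y)) x₂
        + (1/2) * ((W01 S x₁ - W01 S x₂)/(x₁ - x₂)))
    = (1/(2*(x₁ - x₂)^2)) *
        ((S^2 + 2*(x₁ + x₂)) /
            (Real.sqrt (1 + S^2/(4*x₁)) * Real.sqrt (1 + S^2/(4*x₂)))
          - 2*(x₁ + x₂)) := by
  have hpos2 : (0:ℝ) < 1 + S^2/(4*x₂) := by positivity
  have hpos1 : (0:ℝ) < 1 + S^2/(4*x₁) := by positivity
  set a := Real.sqrt (1 + S^2/(4*x₁)) with ha_def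
  set b := Real.sqrt (1 + S^2/(4*x₂)) with hb_def
  have ha : 0 < a := Real.sqrt_pos.mpr hpos1
  have hb : 0 < b := Real.sqrt_pos.mpr hpos2
  have ha2 : a^2 = 1 + S^2/(4*x₁) := Real.sq_sqrt hpos1.le
  have hb2 : b^2 = 1 + S^2/(4*x₂) := Real.sq_sqrt hpos2.le
  have hg : HasDerivAt (fun y : ℝ => 1 + S^2/(4*y)) (-(S^2/(4*x₂^2))) x₂ := by
    have h := ((hasDerivAt_inv h₂.ne').const_mul (S^2/4)).const_add 1
    have hfun : (fun y : ℝ => 1 + S^2/(4*y)) = fun y => 1 + S^2/4 * y⁻¹ := by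
      funext y; ring
    have hval : -(S^2/(4*x₂^2)) = S^2/4 * -(x₂^2)⁻¹ := by ring
    rw [hfun, hval]; exact h
  have hsq : HasDerivAt (fun y : ℝ => Real.sqrt (1 + S^2/(4*y)))
      (1/(2*b) * (-(S^2/(4*x₂^2)))) x₂ := by
    have := (Real.hasDerivAt_sqrt hpos2.ne').comp x₂ hg
    simpa [hb_def, mul_comm, Function.comp_def] using this
  have hW : HasDerivAt (fun y : ℝ => W01 S y)
      (-(2 * (1/(2*b) * (-(S^2/(4*x₂^2)))))) x₂ := by
    simpa [W01] using ((hsq.const_sub 1).const_mul 2)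
  have hnum : HasDerivAt (fun y : ℝ => W01 S x₁ - W01 S y)
      (-(-(2 * (1/(2*b) * (-(S^2/(4*x₂^2))))))) x₂ := hW.const_sub _
  have hden : HasDerivAt (fun y : ℝ => x₁ - y) (-1) x₂ := by
    simpa using (hasDerivAt_id x₂).const_sub x₁
  have hdiv : HasDerivAt (fun y => (W01 S x₁ - W01 S y)/(x₁ - y)) _ x₂ :=
    hnum.div hden (sub_ne_zero.mpr hne)
  rw [hdiv.deriv]
  have hW1 : W01 S x₁ = 2*(1-a) := by rw [W01]
  have hW2 : W01 S x₂ = 2*(1-b) := by rw [W01]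
  rw [hW1, hW2]
  have hx : x₁ - x₂ ≠ 0 := sub_ne_zero.mpr hne
  have hS1 : S^2 = 4*x₁*(a^2-1) := by field_simp at ha2 ⊢; linarith
  have hS2 : S^2 = 4*x₂*(b^2-1) := by field_simp at hb2 ⊢; linarith
  have h12 : 4*x₁*(a^2-1) = 4*x₂*(b^2-1) := hS1.symm.trans hS2
  field_simp
  linear_combination (-2*(x₁ + x₂)) * (hS1 + h12)
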